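/- Fix $n \geq 3$, a field $K$, and $1 \leq i \leq n-2$. With $h^k(X)$ the diagonal matrix whose first $k$ entries are $X$ and the rest $1$, and $e_j = I + E_{j,j+1}$, the following identity holds for all $X \in K$ with $X \neq 0$ and $X \neq -1$: $e_i\, h^i(X)\, e_{i+1}\, e_i = h^{i+1}(1+X^{-1})^{-1}\, h^i(1+X)\, e_{i+1}\, e_i\, h^{i+1}(X^{-1})\, e_{i+1}\, h^i(1+X^{-1})^{-1}\, h^{i+1}(1+X)$. -/

import Mathlib

/-- `h^k(X)`: the diagonal matrix whose first `k` diagonal entries equal `X` and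
whose remaining diagonal entries equal `1`. -/
def hMat (n : ℕ) (K : Type*) [Field K] (k : ℕ) (X : K) : Matrix (Fin n) (Fin n) K :=
  Matrix.diagonal fun a => if (a : ℕ) < k then X else 1

/-- `e_j = I + E_{j,j+1}` (indices 1-based). -/
def eMat (n : ℕ) (K : Type*) [Field K] (j : ℕ) : Matrix (Fin n) (Fin n) K :=
  Matrix.of fun a b =>
    if a = b then 1 else if (a : ℕ) + 1 = j ∧ (b : ℕ) = j then 1 else 0

lemma hMat_inv (n : ℕ) (K : Type*) [Field K] (k : ℕ) (Y : K) (hY : Y ≠ 0) :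
    (hMat n K k Y)⁻¹ = hMat n K k Y⁻¹ := by
  apply Matrix.inv_eq_right_inv
  rw [hMat, hMat, Matrix.diagonal_mul_diagonal]
  have : (fun a : Fin n => (if (a:ℕ) < k then Y else 1) * if (a:ℕ) < k then Y⁻¹ else 1)
      = fun _ => (1 : K) := by
    funext a
    split_ifs with h
    · exact mul_inv_cancel₀ hY
    · exact one_mul 1
  rw [this, Matrix.diagonal_one]

lemma eMat_eq (n : ℕ) (K : Type*) [Field K] (j : ℕ) (hj1 : 1 ≤ j) (hjn : j < n) :
    eMat n K j = 1 + Matrix.single (⟨j - 1, by omega⟩ : Fin n) (⟨j, hjn⟩ : Fin n) (1 : K) := by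
  ext a b
  simp only [eMat, Matrix.of_apply, Matrix.add_apply, Matrix.one_apply]
  by_cases hab : a = b
  · subst hab
    rw [Matrix.single_apply_of_ne, if_pos rfl]
    · simp
    · rintro ⟨h1, h2⟩
      rw [← h2] at h1
      have := congrArg Fin.val h1
      simp only [Fin.val_mk] at this
      omega
  · simp only [if_neg hab, zero_add]
    by_cases h : (a:ℕ) + 1 = j ∧ (b:ℕ) = j
    · rw [if_pos h]
      have ha : (⟨j-1, by omega⟩ : Fin n) = a := Fin.ext (by simp; omega)
      have hb : (⟨j, hjn⟩ : Fin n) = b := Fin.ext (by simp [h.2])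
      rw [ha, hb, Matrix.single_apply_same]
    · rw [if_neg h, Matrix.single_apply_of_ne]
      rintro ⟨h1, h2⟩
      apply h
      have e1 := congrArg Fin.val h1
      have e2 := congrArg Fin.val h2
      simp only [Fin.val_mk] at e1 e2
      omega

lemma diagonal_mul_std (n : ℕ) (K : Type*) [Field K] (d : Fin n → K) (a b : Fin n) (c : K) :
    Matrix.diagonal d * Matrix.single a b c = Matrix.single a b (d a * c) := by
  ext x y
  rw [Matrix.diagonal_mul]
  simp only [Matrix.single, Matrix.of_apply]
  split_ifs with h
  · rw [h.1]
  · ring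

lemma std_mul_diagonal (n : ℕ) (K : Type*) [Field K] (d : Fin n → K) (a b : Fin n) (c : K) :
    Matrix.single a b c * Matrix.diagonal d = Matrix.single a b (c * d b) := by
  ext x y
  rw [Matrix.mul_diagonal]
  simp only [Matrix.single, Matrix.of_apply]
  split_ifs with h
  · rw [h.2]
  · ring

/-- The matrix identity underlying the cluster `𝒳`-mutation for a braid move
`(i, i+1, i) → (i+1, i, i+1)`:
`eᵢ hⁱ(X) eᵢ₊₁ eᵢ = hⁱ⁺¹(1+X⁻¹)⁻¹ hⁱ(1+X) eᵢ₊₁ eᵢ hⁱ⁺¹(X⁻¹) eᵢ₊₁ hⁱ(1+X⁻¹)⁻¹ hⁱ⁺¹(1+X)`. -/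
theorem eMat_hMat_braid_mutation (n : ℕ) (hn : 3 ≤ n) (K : Type*) [Field K]
    (i : ℕ) (hi1 : 1 ≤ i) (hi : i ≤ n - 2) (X : K) (hX0 : X ≠ 0) (hX1 : X ≠ -1) :
    eMat n K i * hMat n K i X * eMat n K (i + 1) * eMat n K i
      = (hMat n K (i + 1) (1 + X⁻¹))⁻¹ * hMat n K i (1 + X) * eMat n K (i + 1) *
          eMat n K i * hMat n K (i + 1) X⁻¹ * eMat n K (i + 1) *
          (hMat n K i (1 + X⁻¹))⁻¹ * hMat n K (i + 1) (1 + X) := by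
  have hin : i + 1 < n := by omega
  have hiln : i < n := by omega
  have hXadd : X + 1 ≠ 0 := by
    intro h; exact hX1 (by linear_combination h)
  have h1 : (1 : K) + X⁻¹ ≠ 0 := by
    intro h
    apply hXadd
    have := congrArg (· * X) h
    simp only [add_mul, one_mul, inv_mul_cancel₀ hX0, zero_mul] at this
    linear_combination this
  rw [hMat_inv n K (i+1) _ h1, hMat_inv n K i _ h1,
    eMat_eq n K i hi1 hiln, eMat_eq n K (i+1) (by omega) hin]
  simp only [Nat.add_sub_cancel]
  have hqp : (⟨i, hiln⟩ : Fin n) ≠ ⟨i - 1, by omega⟩ := by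
    simp [Fin.ext_iff]; omega
  have hrp : (⟨i + 1, hin⟩ : Fin n) ≠ ⟨i - 1, by omega⟩ := by
    simp [Fin.ext_iff]; omega
  have hrq : (⟨i + 1, hin⟩ : Fin n) ≠ ⟨i, hiln⟩ := by
    simp [Fin.ext_iff]
  have c1 : i - 1 < i := by omega
  have c2 : i - 1 < i + 1 := by omega
  have c3 : ¬ (i < i) := by omega
  have c4 : i < i + 1 := by omega
  have c5 : ¬ (i + 1 < i + 1) := by omega
  have c6 : ¬ (i + 1 < i) := by omega
  have z1 : ∀ (a b : Fin n) (c d : K),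
      Matrix.single a (⟨i, hiln⟩ : Fin n) c *
        Matrix.single (⟨i - 1, by omega⟩ : Fin n) b d = 0 :=
    fun a b c d => Matrix.single_mul_single_of_ne (c := c) a _ _ hqp d
  have z2 : ∀ (a b : Fin n) (c d : K),
      Matrix.single a (⟨i + 1, hin⟩ : Fin n) c *
        Matrix.single (⟨i - 1, by omega⟩ : Fin n) b d = 0 :=
    fun a b c d => Matrix.single_mul_single_of_ne (c := c) a _ _ hrp d
  have z3 : ∀ (a b : Fin n) (c d : K),
      Matrix.single a (⟨i + 1, hin⟩ : Fin n) c *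
        Matrix.single (⟨i, hiln⟩ : Fin n) b d = 0 :=
    fun a b c d => Matrix.single_mul_single_of_ne (c := c) a _ _ hrq d
  simp only [hMat, mul_add, add_mul, Matrix.diagonal_mul_diagonal,
    diagonal_mul_std, std_mul_diagonal, Matrix.single_mul_single_same,
    z1, z2, z3,
    Matrix.one_mul, Matrix.mul_one, one_mul, mul_one, add_zero, zero_add,
    Matrix.mul_zero, Matrix.zero_mul, Fin.val_mk, c1, c2, c4,
    if_pos, if_neg, if_true, if_false, c3, c5, c6, ite_true, ite_false]
  ext a b
  simp only [Matrix.add_apply, Matrix.diagonal_apply, Matrix.single,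
    Matrix.of_apply, Fin.ext_iff, Fin.val_mk]
  split_ifs <;> first | omega | (field_simp; try ring)
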